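/- Every real number x ∈ [a₀−1, a₀] admits a representation as an alternating Cantor series x = ∑_{n=1}^∞ (-1)^n ε_n/(d₁⋯d_n) with digits ε_n ∈ {0,…,d_n−1}. -/

import Mathlib

namespace ACR

/-- Product d₁⋯dₙ as a real number. -/
noncomputable def D (d : ℕ → ℕ) (n : ℕ) : ℝ := ∏ j ∈ Finset.Icc 1 n, (d j : ℝ)

lemma D_zero (d : ℕ → ℕ) : D d 0 = 1 := by simp [D]

lemma D_succ (d : ℕ → ℕ) (n : ℕ) : D d (n + 1) = D d n * d (n + 1) := by
  rw [D, D, Finset.prod_Icc_succ_top (Nat.le_add_left 1 n)]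

lemma two_pow_le_D (d : ℕ → ℕ) (hd : ∀ n, 1 ≤ n → 2 ≤ d n) (n : ℕ) :
    (2 : ℝ) ^ n ≤ D d n := by
  induction n with
  | zero => simp [D_zero]
  | succ n ih =>
    rw [D_succ, pow_succ]
    have h2 : (2 : ℝ) ≤ d (n + 1) := by exact_mod_cast hd (n + 1) (Nat.le_add_left 1 n)
    have hp : (0 : ℝ) < 2 ^ n := by positivity
    nlinarith

lemma D_pos (d : ℕ → ℕ) (hd : ∀ n, 1 ≤ n → 2 ≤ d n) (n : ℕ) : 0 < D d n :=
  lt_of_lt_of_le (by positivity) (two_pow_le_D d hd n)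

/-- Remainder sequence of the greedy expansion of `y0`. -/
noncomputable def Y (d : ℕ → ℕ) (y0 : ℝ) : ℕ → ℝ
  | 0 => y0
  | n + 1 => Y d y0 n * d (n + 1) - min ⌊Y d y0 n * d (n + 1)⌋₊ (d (n + 1) - 1)

/-- Digit sequence of the greedy expansion of `y0` (digit for position n+1). -/
noncomputable def C (d : ℕ → ℕ) (y0 : ℝ) (n : ℕ) : ℕ :=
  min ⌊Y d y0 n * d (n + 1)⌋₊ (d (n + 1) - 1)

lemma Y_succ (d : ℕ → ℕ) (y0 : ℝ) (n : ℕ) :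
    Y d y0 (n + 1) = Y d y0 n * d (n + 1) - C d y0 n := rfl

lemma C_le (d : ℕ → ℕ) (y0 : ℝ) (n : ℕ) : C d y0 n ≤ d (n + 1) - 1 :=
  min_le_right _ _

lemma Y_mem (d : ℕ → ℕ) (hd : ∀ n, 1 ≤ n → 2 ≤ d n) (y0 : ℝ)
    (h0 : 0 ≤ y0) (h1 : y0 ≤ 1) : ∀ n, 0 ≤ Y d y0 n ∧ Y d y0 n ≤ 1 := by
  intro n
  induction n with
  | zero => exact ⟨h0, h1⟩
  | succ n ih =>
    have hd2 : 2 ≤ d (n + 1) := hd (n + 1) (Nat.le_add_left 1 n)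
    have hdr : (2 : ℝ) ≤ d (n + 1) := by exact_mod_cast hd2
    set t := Y d y0 n * d (n + 1) with ht
    have ht0 : 0 ≤ t := mul_nonneg ih.1 (by positivity)
    have htd : t ≤ d (n + 1) := by
      calc t ≤ 1 * d (n + 1) := by
              apply mul_le_mul_of_nonneg_right ih.2 (by positivity)
           _ = d (n + 1) := one_mul _
    rw [Y_succ]
    by_cases hcase : ⌊t⌋₊ ≤ d (n + 1) - 1
    · have hCeq : C d y0 n = ⌊t⌋₊ := min_eq_left hcase
      rw [hCeq, ← ht]
      constructor
      · linarith [Nat.floor_le ht0]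
      · linarith [Nat.lt_floor_add_one t]
    · push_neg at hcase
      have hdfloor : d (n + 1) ≤ ⌊t⌋₊ := by omega
      have h1t : (d (n + 1) : ℝ) ≤ t := by
        calc (d (n + 1) : ℝ) ≤ (⌊t⌋₊ : ℝ) := by exact_mod_cast hdfloor
          _ ≤ t := Nat.floor_le ht0
      have hteq : t = d (n + 1) := le_antisymm htd h1t
      have hCeq : C d y0 n = d (n + 1) - 1 := min_eq_right (le_of_lt hcase)
      rw [hCeq, ← ht, hteq]
      have hcast : ((d (n + 1) - 1 : ℕ) : ℝ) = (d (n + 1) : ℝ) - 1 := by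
        have : 1 ≤ d (n + 1) := by omega
        push_cast [this]; ring
      rw [hcast]
      constructor <;> linarith

end ACR

open ACR in
/-- Every x ∈ [a₀−1, a₀] admits a representation as an alternating Cantor
series x = ∑_{n=1}^∞ (-1)^n ε_n/(d₁⋯d_n) with digits ε_n ∈ {0,…,d_n−1}. -/
theorem alternating_cantor_representation (d : ℕ → ℕ) (hd : ∀ n, 1 ≤ n → 2 ≤ d n) (x : ℝ)
    (hx : x ∈ Set.Icc
      ((∑' n : ℕ, (-1 : ℝ) ^ (n + 2) / ∏ j ∈ Finset.Icc 1 (n + 1), (d j : ℝ)) - 1)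
      (∑' n : ℕ, (-1 : ℝ) ^ (n + 2) / ∏ j ∈ Finset.Icc 1 (n + 1), (d j : ℝ))) :
    ∃ ε : ℕ → ℕ, (∀ n, 1 ≤ n → ε n < d n) ∧
      x = ∑' n : ℕ, (-1 : ℝ) ^ (n + 1) * (ε (n + 1) : ℝ) /
            ∏ j ∈ Finset.Icc 1 (n + 1), (d j : ℝ) := by
  obtain ⟨hx1, hx2⟩ := hx
  set a0 : ℝ := ∑' n : ℕ, (-1 : ℝ) ^ (n + 2) / ∏ j ∈ Finset.Icc 1 (n + 1), (d j : ℝ) with ha0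
  set y0 : ℝ := x + 1 - a0 with hy0
  have hy00 : 0 ≤ y0 := by simp only [hy0]; linarith
  have hy01 : y0 ≤ 1 := by simp only [hy0]; linarith
  -- basic facts about D
  have hDpos : ∀ n, (0 : ℝ) < D d n := D_pos d hd
  have hDne : ∀ n, (D d n : ℝ) ≠ 0 := fun n => ne_of_gt (hDpos n)
  have hdpos : ∀ n, (0 : ℝ) < d (n + 1) := fun n => by
    have := hd (n + 1) (Nat.le_add_left 1 n); positivity
  have hYmem := Y_mem d hd y0 hy00 hy01
  -- bound: e ≤ d (n+1) → e / D(n+1) ≤ (1/2)^n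
  have hbound : ∀ n : ℕ, ∀ e : ℝ, 0 ≤ e → e ≤ d (n + 1) → e / D d (n + 1) ≤ (1 / 2) ^ n := by
    intro n e he0 he1
    have h1 : (2 : ℝ) ^ n * d (n + 1) ≤ D d (n + 1) := by
      rw [D_succ]
      exact mul_le_mul_of_nonneg_right (two_pow_le_D d hd n) (le_of_lt (hdpos n))
    have hpp : (0:ℝ) < (2 : ℝ) ^ n * d (n + 1) := mul_pos (by positivity) (hdpos n)
    calc e / D d (n + 1) ≤ (d (n + 1) : ℝ) / ((2 : ℝ) ^ n * d (n + 1)) :=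
          div_le_div₀ (le_of_lt (hdpos n)) he1 hpp h1
      _ = (1 / 2) ^ n := by
          rw [mul_comm, div_mul_eq_div_div, div_self (ne_of_gt (hdpos n)), div_pow, one_pow]
  -- the digit sequence
  set ε : ℕ → ℕ := fun m => if Even m then C d y0 (m - 1) else d m - 1 - C d y0 (m - 1) with hε
  have hεlt : ∀ m, 1 ≤ m → ε m < d m := by
    intro m hm
    have hd2 := hd m hm
    have hC : C d y0 (m - 1) ≤ d m - 1 := by
      have h1 := C_le d y0 (m - 1)
      rwa [Nat.sub_add_cancel hm] at h1
    simp only [hε]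
    split <;> omega
  refine ⟨ε, hεlt, ?_⟩
  set g : ℕ → ℝ := fun n => (-1 : ℝ) ^ (n + 1) * (ε (n + 1) : ℝ) / D d (n + 1) with hg
  set h : ℕ → ℝ := fun n => (-1 : ℝ) ^ (n + 2) / D d (n + 1) with hh
  have hd1r : ∀ n : ℕ, (1 : ℝ) ≤ d (n + 1) := fun n => by
    have := hd (n + 1) (Nat.le_add_left 1 n); exact_mod_cast le_trans (by norm_num) this
  -- summability
  have hgnorm : ∀ n, ‖g n‖ ≤ (1 / 2) ^ n := by
    intro n
    have hεb : (ε (n + 1) : ℝ) ≤ d (n + 1) := by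
      exact_mod_cast le_of_lt (hεlt (n + 1) (Nat.le_add_left 1 n))
    have heq : ‖g n‖ = (ε (n + 1) : ℝ) / D d (n + 1) := by
      simp only [hg]
      rw [Real.norm_eq_abs, abs_div, abs_mul, abs_pow, abs_neg, abs_one, one_pow, one_mul,
        abs_of_nonneg (Nat.cast_nonneg _), abs_of_pos (hDpos (n + 1))]
    rw [heq]
    exact hbound n _ (Nat.cast_nonneg _) hεb
  have hhnorm : ∀ n, ‖h n‖ ≤ (1 / 2) ^ n := by
    intro n
    have heq : ‖h n‖ = 1 / D d (n + 1) := by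
      simp only [hh]
      rw [Real.norm_eq_abs, abs_div, abs_pow, abs_neg, abs_one, one_pow,
        abs_of_pos (hDpos (n + 1))]
    rw [heq]
    exact hbound n 1 (by norm_num) (hd1r n)
  have hgsum : Summable g := Summable.of_norm_bounded summable_geometric_two hgnorm
  have hhsum : Summable h := Summable.of_norm_bounded summable_geometric_two hhnorm
  have ha0' : a0 = ∑' n, h n := rfl
  have hhtends : Filter.Tendsto (fun N => ∑ n ∈ Finset.range N, h n)
      Filter.atTop (nhds a0) :=
    (Summable.hasSum_iff_tendsto_nat hhsum).mp (ha0' ▸ hhsum.hasSum)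
  -- key partial sum identity
  have key : ∀ N, ∑ n ∈ Finset.range N, (g n - h n)
      = y0 - Y d y0 N / D d N - 1 + (if Even N then 1 / D d N else 0) := by
    intro N
    induction N with
    | zero => simp [Y, D_zero]
    | succ N ih =>
      rw [Finset.sum_range_succ, ih]
      have hd2 : (2 : ℝ) ≤ d (N + 1) := by
        exact_mod_cast hd (N + 1) (Nat.le_add_left 1 N)
      have hdn : (d (N + 1) : ℝ) ≠ 0 := by linarith
      have hCle := C_le d y0 N
      have hdN2 := hd (N + 1) (Nat.le_add_left 1 N)
      have hYs : Y d y0 (N + 1) = Y d y0 N * d (N + 1) - C d y0 N := Y_succ d y0 N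
      have hDs : D d (N + 1) = D d N * d (N + 1) := D_succ d N
      rcases Nat.even_or_odd N with hN | hN
      · have hN1 : ¬ Even (N + 1) := by simp [Nat.even_add_one, hN]
        have hnat : d (N + 1) - 1 - C d y0 N + C d y0 N + 1 = d (N + 1) := by omega
        have hεv : (ε (N + 1) : ℝ) = (d (N + 1) : ℝ) - 1 - (C d y0 N : ℝ) := by
          simp only [hε, if_neg hN1, Nat.add_sub_cancel]
          have hc := congrArg (Nat.cast : ℕ → ℝ) hnat
          push_cast at hc
          linarith
        simp only [hg, hh, if_pos hN, if_neg hN1, hYs, hDs, hεv, pow_succ,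
          hN.neg_one_pow]
        have hDvne := hDne N
        set yv := Y d y0 N
        set cv := (C d y0 N : ℝ)
        set dv := (d (N + 1) : ℝ)
        set Dv := D d N
        field_simp
        ring
      · have hN' : ¬ Even N := Nat.not_even_iff_odd.mpr hN
        have hN1 : Even (N + 1) := Nat.even_add_one.mpr hN'
        have hεv : (ε (N + 1) : ℝ) = (C d y0 N : ℝ) := by
          simp only [hε, if_pos hN1, Nat.add_sub_cancel]
        simp only [hg, hh, if_neg hN', if_pos hN1, hYs, hDs, hεv, pow_succ,
          hN.neg_one_pow]
        have hDvne := hDne N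
        set yv := Y d y0 N
        set cv := (C d y0 N : ℝ)
        set dv := (d (N + 1) : ℝ)
        set Dv := D d N
        field_simp
        ring
  -- limits
  have hhalf : Filter.Tendsto (fun N : ℕ => ((1 : ℝ) / 2) ^ N) Filter.atTop (nhds 0) :=
    tendsto_pow_atTop_nhds_zero_of_lt_one (by norm_num) (by norm_num)
  have hDle : ∀ N : ℕ, 1 / D d N ≤ (1 / 2) ^ N := fun N => by
    rw [div_pow, one_pow]
    exact div_le_div₀ (by norm_num) le_rfl (by positivity) (two_pow_le_D d hd N)
  have hY0 : Filter.Tendsto (fun N => Y d y0 N / D d N) Filter.atTop (nhds 0) := by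
    apply squeeze_zero (fun N => div_nonneg (hYmem N).1 (le_of_lt (hDpos N))) (fun N => ?_) hhalf
    calc Y d y0 N / D d N ≤ 1 / D d N :=
          (div_le_div_iff_of_pos_right (hDpos N)).mpr (hYmem N).2
      _ ≤ (1 / 2) ^ N := hDle N
  have hF : Filter.Tendsto (fun N : ℕ => if Even N then 1 / D d N else 0)
      Filter.atTop (nhds 0) := by
    apply squeeze_zero (fun N => ?_) (fun N => ?_) hhalf
    · split
      · exact div_nonneg zero_le_one (le_of_lt (hDpos _))
      · exact le_rfl
    · split
      · exact hDle _
      · positivity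
  have hconst : Filter.Tendsto
      (fun N => y0 - Y d y0 N / D d N - 1 + (if Even N then 1 / D d N else 0))
      Filter.atTop (nhds (y0 - 0 - 1 + 0)) :=
    ((tendsto_const_nhds.sub hY0).sub tendsto_const_nhds).add hF
  have h1 : Filter.Tendsto (fun N => ∑ n ∈ Finset.range N, (g n - h n))
      Filter.atTop (nhds (y0 - 1)) := by
    have h1' := hconst.congr (fun N => (key N).symm)
    simpa using h1'
  have h2 : Filter.Tendsto (fun N => ∑ n ∈ Finset.range N, g n)
      Filter.atTop (nhds (y0 - 1 + a0)) := by
    refine (h1.add hhtends).congr fun N => ?_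
    rw [← Finset.sum_add_distrib]
    exact Finset.sum_congr rfl fun n _ => by ring
  have hxeq : y0 - 1 + a0 = x := by simp only [hy0]; ring
  have hgx : HasSum g x :=
    (Summable.hasSum_iff_tendsto_nat hgsum).mpr (hxeq ▸ h2)
  exact hgx.tsum_eq.symm
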